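/- Let A be an abelian group and a, b ∈ A with {0, a, b, a+b} a 4-element set, 2a ≠ 0, 2b ≠ 0, and {±a, ±2a} ∩ {±b, ±2b} = ∅. Then the set of Â-orbits of 3-element subsets of {0, a, b, a+b} equals the two-element set consisting of the Â-orbit of {0, a, b} and the Â-orbit of {0, a, a+b}; in particular these two orbits are distinct. -/

import Mathlib

variable {A : Type*}

def orbHat [AddCommGroup A] (X : Set A) : Set (Set A) :=
  {Y | ∃ e : A, Y = (fun x => x + e) '' X ∨ Y = (fun x => -x + e) '' X}

section Aux
variable [AddCommGroup A]

lemma orbHat_self (X : Set A) : X ∈ orbHat X := ⟨0, Or.inl (by simp)⟩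

lemma orbHat_add (X : Set A) (e : A) : orbHat ((fun x => x + e) '' X) = orbHat X := by
  ext Y
  constructor
  · rintro ⟨f, hY | hY⟩
    · exact ⟨e + f, Or.inl (by rw [hY, Set.image_image]; exact Set.image_congr' (fun x => by abel))⟩
    · exact ⟨f - e, Or.inr (by rw [hY, Set.image_image]; exact Set.image_congr' (fun x => by abel))⟩
  · rintro ⟨f, hY | hY⟩
    · exact ⟨f - e, Or.inl (by rw [hY, Set.image_image]; exact Set.image_congr' (fun x => by abel))⟩
    · exact ⟨f + e, Or.inr (by rw [hY, Set.image_image]; exact Set.image_congr' (fun x => by abel))⟩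

lemma orbHat_neg (X : Set A) (e : A) : orbHat ((fun x => -x + e) '' X) = orbHat X := by
  ext Y
  constructor
  · rintro ⟨f, hY | hY⟩
    · exact ⟨e + f, Or.inr (by rw [hY, Set.image_image]; exact Set.image_congr' (fun x => by abel))⟩
    · exact ⟨f - e, Or.inl (by rw [hY, Set.image_image]; exact Set.image_congr' (fun x => by abel))⟩
  · rintro ⟨f, hY | hY⟩
    · exact ⟨f + e, Or.inr (by rw [hY, Set.image_image]; exact Set.image_congr' (fun x => by abel))⟩
    · exact ⟨f - e, Or.inl (by rw [hY, Set.image_image]; exact Set.image_congr' (fun x => by abel))⟩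

omit [AddCommGroup A] in
lemma ncard_le_three' (x y z : A) : ({x, y, z} : Set A).ncard ≤ 3 := by
  refine le_trans (Set.ncard_insert_le _ _) ?_
  refine Nat.succ_le_succ (le_trans (Set.ncard_insert_le _ _) ?_)
  simp [Set.ncard_singleton]

end Aux

set_option maxHeartbeats 1000000 in
theorem stmt_8 [AddCommGroup A] (a b : A)
    (hcard : ({0, a, b, a + b} : Set A).ncard = 4)
    (ha2 : a + a ≠ 0) (hb2 : b + b ≠ 0)
    (hdisj : ({a, -a, a + a, -(a + a)} ∩ {b, -b, b + b, -(b + b)} : Set A) = ∅) :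
    {O : Set (Set A) | ∃ T : Set A, T ⊆ ({0, a, b, a + b} : Set A) ∧ T.ncard = 3 ∧
        O = orbHat T} =
      ({orbHat ({0, a, b} : Set A), orbHat ({0, a, a + b} : Set A)} : Set (Set (Set A))) ∧
    orbHat ({0, a, b} : Set A) ≠ orbHat ({0, a, a + b} : Set A) := by
  have hd := Set.eq_empty_iff_forall_notMem.mp hdisj
  simp only [Set.mem_inter_iff, Set.mem_insert_iff, Set.mem_singleton_iff, not_and, not_or] at hd
  have ha0 : a ≠ 0 := by
    intro h
    rw [h, Set.insert_idem] at hcard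
    have := ncard_le_three' (0 : A) b (0 + b)
    omega
  have hb0 : b ≠ 0 := by
    intro h
    rw [h, Set.insert_comm a 0, Set.insert_idem] at hcard
    have := ncard_le_three' (0 : A) a (a + 0)
    omega
  have hab : a ≠ b := fun h => (hd a (Or.inl rfl)).1 h
  have hab' : a + b ≠ 0 := fun h => (hd a (Or.inl rfl)).2.1 (eq_neg_of_add_eq_zero_left h)
  have h2ab : a + a + b ≠ 0 := fun h =>
    (hd (-(a + a)) (by tauto)).1 (neg_eq_of_add_eq_zero_right h)
  have ha2b : a + (b + b) ≠ 0 := fun h =>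
    (hd a (Or.inl rfl)).2.2.2 (eq_neg_of_add_eq_zero_left h)
  have n0a : (0 : A) ≠ a := Ne.symm ha0
  have n0b : (0 : A) ≠ b := Ne.symm hb0
  have n0ab : (0 : A) ≠ a + b := Ne.symm hab'
  have naba : a + b ≠ a := fun h => hb0 (by rwa [add_eq_left] at h)
  have nabb : a + b ≠ b := fun h => ha0 (by rwa [add_eq_right] at h)
  have hne : orbHat ({0, a, b} : Set A) ≠ orbHat ({0, a, a + b} : Set A) := by
    intro h
    have hm : ({0, a, a + b} : Set A) ∈ orbHat ({0, a, b} : Set A) := h ▸ orbHat_self _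
    obtain ⟨e, h1 | h1⟩ := hm
    · simp only [Set.image_insert_eq, Set.image_singleton, zero_add] at h1
      have he : e ∈ ({0, a, a + b} : Set A) := by rw [h1]; exact Set.mem_insert _ _
      simp only [Set.mem_insert_iff, Set.mem_singleton_iff] at he
      rcases he with he | he | he <;> rw [he] at h1
      · have h2 : a + b ∈ ({0, a + 0, b + 0} : Set A) := by
          rw [← h1]; simp
        simp only [add_zero, Set.mem_insert_iff, Set.mem_singleton_iff] at h2
        rcases h2 with h2 | h2 | h2
        · exact hab' h2
        · exact hb0 (by rwa [add_eq_left] at h2)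
        · exact ha0 (by rwa [add_eq_right] at h2)
      · have h2 : (0 : A) ∈ ({a, a + a, b + a} : Set A) := by rw [← h1]; simp
        simp only [Set.mem_insert_iff, Set.mem_singleton_iff] at h2
        rcases h2 with h2 | h2 | h2
        · exact ha0 h2.symm
        · exact ha2 h2.symm
        · exact hab' (by rw [add_comm]; exact h2.symm)
      · have h2 : (0 : A) ∈ ({a + b, a + (a + b), b + (a + b)} : Set A) := by rw [← h1]; simp
        simp only [Set.mem_insert_iff, Set.mem_singleton_iff] at h2
        rcases h2 with h2 | h2 | h2
        · exact hab' h2.symm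
        · exact h2ab (by rw [add_assoc]; exact h2.symm)
        · exact ha2b (by rw [show a + (b + b) = b + (a + b) from by abel]; exact h2.symm)
    · simp only [Set.image_insert_eq, Set.image_singleton, neg_zero, zero_add] at h1
      have he : e ∈ ({0, a, a + b} : Set A) := by rw [h1]; exact Set.mem_insert _ _
      simp only [Set.mem_insert_iff, Set.mem_singleton_iff] at he
      rcases he with he | he | he <;> rw [he] at h1
      · have h2 : a ∈ ({(0 : A), -a + 0, -b + 0} : Set A) := by rw [← h1]; simp
        simp only [add_zero, Set.mem_insert_iff, Set.mem_singleton_iff] at h2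
        rcases h2 with h2 | h2 | h2
        · exact ha0 h2
        · exact ha2 (add_eq_zero_iff_eq_neg.mpr h2)
        · exact hab' (add_eq_zero_iff_eq_neg.mpr h2)
      · have h2 : a + b ∈ ({a, -a + a, -b + a} : Set A) := by rw [← h1]; simp
        simp only [Set.mem_insert_iff, Set.mem_singleton_iff] at h2
        rcases h2 with h2 | h2 | h2
        · exact hb0 (by rwa [add_eq_left] at h2)
        · exact hab' (by rwa [neg_add_cancel] at h2)
        · exact hb2 (add_eq_zero_iff_eq_neg.mpr
            (add_left_cancel (h2.trans (add_comm (-b) a))))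
      · have h2 : (0 : A) ∈ ({a + b, -a + (a + b), -b + (a + b)} : Set A) := by
          rw [← h1]; simp
        simp only [Set.mem_insert_iff, Set.mem_singleton_iff] at h2
        rcases h2 with h2 | h2 | h2
        · exact hab' h2.symm
        · exact hb0 (by rw [show b = -a + (a + b) from by abel, ← h2])
        · exact ha0 (by rw [show a = -b + (a + b) from by abel, ← h2])
  refine ⟨?_, hne⟩
  ext O
  simp only [Set.mem_setOf_eq, Set.mem_insert_iff, Set.mem_singleton_iff]
  constructor
  · rintro ⟨T, hTS, hT3, rfl⟩
    have hSfin : ({0, a, b, a + b} : Set A).Finite := Set.toFinite _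
    have hTne : T ≠ ({0, a, b, a + b} : Set A) := by
      intro h; rw [h, hcard] at hT3; omega
    obtain ⟨x, hxS, hxT⟩ := Set.exists_of_ssubset (hTS.ssubset_of_ne hTne)
    have hTsub : T ⊆ ({0, a, b, a + b} : Set A) \ {x} := Set.subset_diff_singleton hTS hxT
    have hdiff : (({0, a, b, a + b} : Set A) \ {x}).ncard = 3 := by
      rw [Set.ncard_diff_singleton_of_mem hxS, hcard]
    have hTeq : T = ({0, a, b, a + b} : Set A) \ {x} :=
      Set.eq_of_subset_of_ncard_le hTsub (by rw [hdiff, hT3]) hSfin.diff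
    simp only [Set.mem_insert_iff, Set.mem_singleton_iff] at hxS
    rcases hxS with hx | hx | hx | hx <;> rw [hx] at hTeq
    · have hT : T = ({a, b, a + b} : Set A) := by
        rw [hTeq]
        ext y
        simp only [Set.mem_diff, Set.mem_insert_iff, Set.mem_singleton_iff]
        constructor
        · rintro ⟨h | h | h | h, hn⟩ <;> tauto
        · rintro (rfl | rfl | rfl)
          exacts [⟨by tauto, ha0⟩, ⟨by tauto, hb0⟩, ⟨by tauto, hab'⟩]
      have himg : ({a, b, a + b} : Set A) = (fun x => -x + (a + b)) '' {0, a, b} := by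
        simp only [Set.image_insert_eq, Set.image_singleton, neg_zero, zero_add]
        rw [show -a + (a + b) = b from by abel, show -b + (a + b) = a from by abel]
        ext y
        simp only [Set.mem_insert_iff, Set.mem_singleton_iff]
        tauto
      left
      rw [hT, himg, orbHat_neg]
    · have hT : T = ({0, b, a + b} : Set A) := by
        rw [hTeq]
        ext y
        simp only [Set.mem_diff, Set.mem_insert_iff, Set.mem_singleton_iff]
        constructor
        · rintro ⟨h | h | h | h, hn⟩ <;> tauto
        · rintro (rfl | rfl | rfl)
          exacts [⟨by tauto, n0a⟩, ⟨by tauto, Ne.symm hab⟩, ⟨by tauto, naba⟩]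
      have himg : ({0, b, a + b} : Set A) = (fun x => -x + (a + b)) '' {0, a, a + b} := by
        simp only [Set.image_insert_eq, Set.image_singleton, neg_zero, zero_add]
        rw [show -a + (a + b) = b from by abel, show -(a + b) + (a + b) = 0 from by abel]
        ext y
        simp only [Set.mem_insert_iff, Set.mem_singleton_iff]
        tauto
      right
      rw [hT, himg, orbHat_neg]
    · have hT : T = ({0, a, a + b} : Set A) := by
        rw [hTeq]
        ext y
        simp only [Set.mem_diff, Set.mem_insert_iff, Set.mem_singleton_iff]
        constructor
        · rintro ⟨h | h | h | h, hn⟩ <;> tauto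
        · rintro (rfl | rfl | rfl)
          exacts [⟨by tauto, n0b⟩, ⟨by tauto, hab⟩, ⟨by tauto, nabb⟩]
      right
      rw [hT]
    · have hT : T = ({0, a, b} : Set A) := by
        rw [hTeq]
        ext y
        simp only [Set.mem_diff, Set.mem_insert_iff, Set.mem_singleton_iff]
        constructor
        · rintro ⟨h | h | h | h, hn⟩ <;> tauto
        · rintro (rfl | rfl | rfl)
          exacts [⟨by tauto, n0ab⟩, ⟨by tauto, Ne.symm naba⟩, ⟨by tauto, Ne.symm nabb⟩]
      left
      rw [hT]
  · rintro (rfl | rfl)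
    · refine ⟨{0, a, b}, ?_, ?_, rfl⟩
      · intro y hy
        simp only [Set.mem_insert_iff, Set.mem_singleton_iff] at hy ⊢
        tauto
      · rw [Set.ncard_insert_of_notMem (by simp [n0a, n0b]),
          Set.ncard_insert_of_notMem (by simp [hab]), Set.ncard_singleton]
    · refine ⟨{0, a, a + b}, ?_, ?_, rfl⟩
      · intro y hy
        simp only [Set.mem_insert_iff, Set.mem_singleton_iff] at hy ⊢
        tauto
      · rw [Set.ncard_insert_of_notMem (by simp [n0a, n0ab]),
          Set.ncard_insert_of_notMem (by simp [Ne.symm naba]), Set.ncard_singleton]
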